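/- Let k, t, n be positive integers with t < k ≤ n. Let G be a k-partite family of k-element subsets of [n] (with respect to a partition [n] = X₁ ⊔ … ⊔ X_k) such that: (i) G is not t-avoiding, i.e., there exist distinct E, F ∈ G with |E ∩ F| = t; and (ii) for every J ∈ Int(G) and every F ∈ G, the family G(F_J) is 2k-diverse. Then ρ(G) ≥ (k+t)·|G|² / (4k·|∂^{(t)}(G)|). -/

import Mathlib

/-- `X : Fin k → Finset ℕ` is a partition of `[n] = {1,…,n}` into `k` parts. -/
def IsPartition (n k : ℕ) (X : Fin k → Finset ℕ) : Prop :=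
  (∀ i j, i ≠ j → Disjoint (X i) (X j)) ∧ Finset.univ.biUnion X = Finset.Icc 1 n

/-- The projection `π(Y) = {i ∈ [k] : Y ∩ Xᵢ ≠ ∅}`. -/
def piProj {k : ℕ} (X : Fin k → Finset ℕ) (Y : Finset ℕ) : Finset (Fin k) :=
  Finset.univ.filter (fun i => (Y ∩ X i).Nonempty)

/-- The intersection structure `Int(F) = {π(E ∩ F) : E, F ∈ F, E ≠ F}`. -/
def IntStr {k : ℕ} (X : Fin k → Finset ℕ) (F : Finset (Finset ℕ)) :
    Finset (Finset (Fin k)) :=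
  F.offDiag.image (fun p => piProj X (p.1 ∩ p.2))

/-- `F_J = F ∩ ⋃_{i ∈ J} Xᵢ`. -/
def restrJ {k : ℕ} (X : Fin k → Finset ℕ) (F : Finset ℕ) (J : Finset (Fin k)) :
    Finset ℕ :=
  F ∩ J.biUnion X

/-- `H(Y) = {H \ Y : H ∈ H, Y ⊆ H}`. -/
def fam (H : Finset (Finset ℕ)) (Y : Finset ℕ) : Finset (Finset ℕ) :=
  (H.filter (fun A => Y ⊆ A)).image (fun A => A \ Y)

/-- A family `H` is `s`-diverse if every element lies in at most `|H|/s` members of `H`. -/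
def Diverse (s : ℝ) (H : Finset (Finset ℕ)) : Prop :=
  ∀ v : ℕ, ((H.filter (fun A => v ∈ A)).card : ℝ) ≤ (H.card : ℝ) / s

/-- The `i`-shadow `∂⁽ⁱ⁾(F) = {D : |D| = i, D ⊆ F for some F ∈ F}`. -/
def shadow (i : ℕ) (F : Finset (Finset ℕ)) : Finset (Finset ℕ) :=
  F.biUnion (fun A => A.powersetCard i)

/-- The number of unordered pairs of distinct sets `F₁, F₂ ∈ F` with `|F₁ ∩ F₂| = t`. -/
def rhoPairs (t : ℕ) (F : Finset (Finset ℕ)) : ℕ :=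
  ((F.powersetCard 2).filter
    (fun P => ∃ A ∈ P, ∃ B ∈ P, A ≠ B ∧ (A ∩ B).card = t)).card



open Finset
lemma card_restrJ {n k : ℕ} {X : Fin k → Finset ℕ} (hX : IsPartition n k X)
    {A : Finset ℕ} (hA : ∀ i, (A ∩ X i).card = 1) (J : Finset (Fin k)) :
    (restrJ X A J).card = J.card := by
  have h1 : restrJ X A J = J.biUnion (fun i => A ∩ X i) := by
    rw [restrJ, inter_biUnion]
  rw [h1, card_biUnion, Finset.sum_congr rfl (fun i _ => hA i), Finset.sum_const,
    smul_eq_mul, mul_one]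
  intro i _ j _ hij
  exact Finset.disjoint_left.mpr fun v hv1 hv2 =>
    Finset.disjoint_left.mp (hX.1 i j hij) (mem_inter.mp hv1).2 (mem_inter.mp hv2).2

lemma card_piProj {n k : ℕ} {X : Fin k → Finset ℕ} (hX : IsPartition n k X)
    {A Y : Finset ℕ} (hYA : Y ⊆ A) (hAn : A ⊆ Finset.Icc 1 n)
    (hA : ∀ i, (A ∩ X i).card = 1) :
    (piProj X Y).card = Y.card := by
  have hle : ∀ i, (Y ∩ X i).card ≤ 1 := fun i =>
    le_trans (card_le_card (inter_subset_inter hYA le_rfl)) (hA i).le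
  have hY : Y = Finset.univ.biUnion (fun i => Y ∩ X i) := by
    rw [← inter_biUnion, hX.2]
    exact (inter_eq_left.mpr (hYA.trans hAn)).symm
  have hdisj : ∀ i ∈ (Finset.univ : Finset (Fin k)), ∀ j ∈ Finset.univ, i ≠ j →
      Disjoint (Y ∩ X i) (Y ∩ X j) := by
    intro i _ j _ hij
    exact Finset.disjoint_left.mpr fun v hv1 hv2 =>
      Finset.disjoint_left.mp (hX.1 i j hij) (mem_inter.mp hv1).2 (mem_inter.mp hv2).2
  have h2 : Y.card = ∑ i, (Y ∩ X i).card := by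
    conv_lhs => rw [hY]
    exact card_biUnion hdisj
  rw [piProj, card_filter, h2]
  refine Finset.sum_congr rfl fun i _ => ?_
  by_cases h : (Y ∩ X i).Nonempty
  · rw [if_pos h]
    exact le_antisymm (hle i) (card_pos.mpr h) |>.symm
  · rw [if_neg h, card_eq_zero.mpr (not_nonempty_iff_eq_empty.mp h)]



lemma class_bound (k t : ℕ) (hk : 0 < k) (htk : t < k)
    (G : Finset (Finset ℕ)) (D : Finset ℕ) (hD : D.card = t)
    (hGk : ∀ A ∈ G, A.card = k)
    (hdiv : Diverse (2 * (k : ℝ)) (fam G D)) :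
    ((k : ℝ) + t) * ((G.filter (fun A => D ⊆ A)).card : ℝ) ^ 2 / (4 * k)
      ≤ (((G.powersetCard 2).filter
          (fun P => ∃ A ∈ P, ∃ B ∈ P, A ≠ B ∧ A ∩ B = D)).card : ℝ) := by
  classical
  set H : Finset (Finset ℕ) := G.filter (fun A => D ⊆ A) with hHdef
  set m : ℕ := H.card with hmdef
  have hinj : Set.InjOn (fun A => A \ D) ↑H := by
    intro A hA B hB hAB
    have hDA : D ⊆ A := (mem_filter.mp hA).2
    have hDB : D ⊆ B := (mem_filter.mp hB).2
    have : A \ D ∪ D = B \ D ∪ D := by simp only at hAB; rw [hAB]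
    rwa [sdiff_union_of_subset hDA, sdiff_union_of_subset hDB] at this
  have hfam : fam G D = H.image (fun A => A \ D) := rfl
  have hfamcard : (fam G D).card = m := by rw [hfam, card_image_of_injOn hinj]
  have hdeg : ∀ v ∉ D, ((H.filter (fun B => v ∈ B)).card : ℝ) ≤ (m : ℝ) / (2 * k) := by
    intro v hv
    have h1 : (fam G D).filter (fun C => v ∈ C)
        = (H.filter (fun B => v ∈ B)).image (fun A => A \ D) := by
      rw [hfam, filter_image]
      congr 1
      apply filter_congr
      intro B _
      simp [Finset.mem_sdiff, hv]
    have h2 := hdiv v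
    rwa [h1, card_image_of_injOn (hinj.mono (by exact_mod_cast filter_subset _ _)),
      hfamcard] at h2
  -- per-A good/bad counting
  have hmain : ∀ A ∈ H,
      ((m : ℝ) - 1) - ((k : ℝ) - t) * ((m : ℝ)/(2*k) - 1)
        ≤ (((H.erase A).filter (fun B => A ∩ B = D)).card : ℝ) := by
    intro A hA
    have hDA : D ⊆ A := (mem_filter.mp hA).2
    have hAG : A ∈ G := (mem_filter.mp hA).1
    have hm1 : 1 ≤ m := card_pos.mpr ⟨A, hA⟩
    have hsplit : ((H.erase A).filter (fun B => A ∩ B = D)).card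
        + ((H.erase A).filter (fun B => ¬ A ∩ B = D)).card = m - 1 := by
      rw [card_filter_add_card_filter_not, card_erase_of_mem hA]
    have hbadsub : (H.erase A).filter (fun B => ¬ A ∩ B = D)
        ⊆ (A \ D).biUnion (fun v => (H.filter (fun B => v ∈ B)).erase A) := by
      intro B hB
      obtain ⟨hB1, hB2⟩ := mem_filter.mp hB
      obtain ⟨hBA, hBH⟩ := mem_erase.mp hB1
      have hDB : D ⊆ B := (mem_filter.mp hBH).2
      have hss : D ⊂ A ∩ B :=
        ssubset_of_subset_of_ne (subset_inter hDA hDB) (fun h => hB2 h.symm)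
      obtain ⟨v, hvAB, hvD⟩ := exists_of_ssubset hss
      refine mem_biUnion.mpr ⟨v, mem_sdiff.mpr ⟨(mem_inter.mp hvAB).1, hvD⟩, ?_⟩
      exact mem_erase.mpr ⟨hBA, mem_filter.mpr ⟨hBH, (mem_inter.mp hvAB).2⟩⟩
    have hbadcard : (((H.erase A).filter (fun B => ¬ A ∩ B = D)).card : ℝ)
        ≤ ((k : ℝ) - t) * ((m : ℝ)/(2*k) - 1) := by
      have hle1 : ((H.erase A).filter (fun B => ¬ A ∩ B = D)).card
          ≤ ∑ v ∈ A \ D, ((H.filter (fun B => v ∈ B)).erase A).card :=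
        le_trans (card_le_card hbadsub) (card_biUnion_le)
      have hterm : ∀ v ∈ A \ D,
          ((((H.filter (fun B => v ∈ B)).erase A).card : ℝ))
            ≤ (m : ℝ)/(2*k) - 1 := by
        intro v hv
        obtain ⟨hvA, hvD⟩ := mem_sdiff.mp hv
        have hAf : A ∈ H.filter (fun B => v ∈ B) := mem_filter.mpr ⟨hA, hvA⟩
        rw [card_erase_of_mem hAf]
        have h1 : 1 ≤ (H.filter (fun B => v ∈ B)).card := card_pos.mpr ⟨A, hAf⟩
        rw [Nat.cast_sub h1]
        have := hdeg v hvD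
        push_cast
        linarith
      have hcardAD : (A \ D).card = k - t := by
        rw [card_sdiff_of_subset hDA, hGk A hAG, hD]
      calc (((H.erase A).filter (fun B => ¬ A ∩ B = D)).card : ℝ)
          ≤ (∑ v ∈ A \ D, ((H.filter (fun B => v ∈ B)).erase A).card : ℕ) := by
            exact_mod_cast hle1
        _ = ∑ v ∈ A \ D, ((((H.filter (fun B => v ∈ B)).erase A).card : ℝ)) := by
            push_cast; ring
        _ ≤ ∑ _v ∈ A \ D, ((m : ℝ)/(2*k) - 1) := Finset.sum_le_sum hterm
        _ = ((k : ℝ) - t) * ((m : ℝ)/(2*k) - 1) := by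
            rw [Finset.sum_const, hcardAD, nsmul_eq_mul, Nat.cast_sub htk.le]
    have hme : ((m : ℝ) - 1) = (((H.erase A).filter (fun B => A ∩ B = D)).card : ℝ)
        + (((H.erase A).filter (fun B => ¬ A ∩ B = D)).card : ℝ) := by
      have := hsplit
      have h' : (((H.erase A).filter (fun B => A ∩ B = D)).card
          + ((H.erase A).filter (fun B => ¬ A ∩ B = D)).card : ℝ) = ((m - 1 : ℕ) : ℝ) := by
        exact_mod_cast congrArg (Nat.cast : ℕ → ℝ) this
      rw [Nat.cast_sub hm1] at h'
      push_cast at h' ⊢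
      linarith
    linarith
  -- double counting via sigma type
  set P : Finset (Finset (Finset ℕ)) := (G.powersetCard 2).filter
      (fun P => ∃ A ∈ P, ∃ B ∈ P, A ≠ B ∧ A ∩ B = D) with hPdef
  set Ssig : Finset ((_ : Finset ℕ) × Finset ℕ) :=
      H.sigma (fun A => (H.erase A).filter (fun B => A ∩ B = D)) with hSdef
  have hmem : ∀ p ∈ Ssig, p.1 ∈ H ∧ p.2 ∈ H ∧ p.2 ≠ p.1 ∧ p.1 ∩ p.2 = D := by
    intro p hp
    obtain ⟨h1, h2⟩ := mem_sigma.mp hp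
    obtain ⟨h3, h4⟩ := mem_filter.mp h2
    exact ⟨h1, (mem_erase.mp h3).2, (mem_erase.mp h3).1, h4⟩
  have hSlb : (m : ℝ) * (((m : ℝ) - 1) - ((k : ℝ) - t) * ((m : ℝ)/(2*k) - 1))
      ≤ (Ssig.card : ℝ) := by
    rw [hSdef, card_sigma]
    push_cast
    have := Finset.sum_le_sum hmain
    rw [Finset.sum_const, nsmul_eq_mul] at this
    exact this
  set f : ((_ : Finset ℕ) × Finset ℕ) → Finset (Finset ℕ) :=
    (fun p => ({p.1, p.2} : Finset (Finset ℕ))) with hfdef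
  have himg : Ssig.image f ⊆ P := by
    intro q hq
    obtain ⟨p, hp, rfl⟩ := mem_image.mp hq
    obtain ⟨h1, h2, hne, hint⟩ := hmem p hp
    refine mem_filter.mpr ⟨mem_powersetCard.mpr ⟨?_, ?_⟩,
      ⟨p.1, mem_insert_self _ _, p.2, mem_insert_of_mem (mem_singleton_self _),
        hne.symm, hint⟩⟩
    · rw [insert_subset_iff, singleton_subset_iff]
      exact ⟨(mem_filter.mp h1).1, (mem_filter.mp h2).1⟩
    · exact card_pair hne.symm
  have hfiber : ∀ q ∈ Ssig.image f, (Ssig.filter (fun p => f p = q)).card ≤ 2 := by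
    intro q hq
    obtain ⟨p₀, hp₀, rfl⟩ := mem_image.mp hq
    obtain ⟨a₀, b₀⟩ := p₀
    have hsub : Ssig.filter (fun p => f p = f ⟨a₀, b₀⟩)
        ⊆ ({⟨a₀, b₀⟩, ⟨b₀, a₀⟩} : Finset ((_ : Finset ℕ) × Finset ℕ)) := by
      intro p hp
      obtain ⟨hpS, hpq⟩ := mem_filter.mp hp
      obtain ⟨a, b⟩ := p
      obtain ⟨_, _, hne, _⟩ := hmem _ hpS
      simp only [hfdef] at hpq
      simp only at hne
      have h1 : a ∈ ({a₀, b₀} : Finset (Finset ℕ)) := by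
        rw [← hpq]; exact mem_insert_self _ _
      have h2 : b ∈ ({a₀, b₀} : Finset (Finset ℕ)) := by
        rw [← hpq]; exact mem_insert_of_mem (mem_singleton_self _)
      simp only [mem_insert, mem_singleton] at h1 h2
      rcases h1 with rfl | rfl
      · rcases h2 with rfl | rfl
        · exact absurd rfl hne
        · exact mem_insert_self _ _
      · rcases h2 with rfl | rfl
        · exact mem_insert_of_mem (mem_singleton_self _)
        · exact absurd rfl hne
    refine le_trans (card_le_card hsub) (le_trans (card_insert_le _ _) ?_)
    simp
  have hcount : Ssig.card ≤ 2 * P.card :=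
    le_trans (card_le_mul_card_image Ssig 2 hfiber)
      (Nat.mul_le_mul_left 2 (card_le_card himg))
  have hP : (m : ℝ) * (((m : ℝ) - 1) - ((k : ℝ) - t) * ((m : ℝ)/(2*k) - 1))
      ≤ 2 * (P.card : ℝ) := le_trans hSlb (by exact_mod_cast hcount)
  have hk' : (0 : ℝ) < k := by exact_mod_cast hk
  have hkt : (1 : ℝ) ≤ (k : ℝ) - t := by
    have : (t : ℝ) + 1 ≤ k := by exact_mod_cast htk
    linarith
  have hm0 : (0 : ℝ) ≤ (m : ℝ) := Nat.cast_nonneg _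
  rw [div_le_iff₀ (by positivity)]
  have hP2 : (m : ℝ) * (((m : ℝ) - 1) * (2*k) - ((k : ℝ) - t) * ((m : ℝ) - 2*k))
      ≤ 2 * (P.card : ℝ) * (2*k) := by
    have h := mul_le_mul_of_nonneg_right hP (by positivity : (0:ℝ) ≤ 2*k)
    have heq : (m : ℝ) * (((m : ℝ) - 1) - ((k : ℝ) - t) * ((m : ℝ)/(2*k) - 1)) * (2*k)
        = (m : ℝ) * (((m : ℝ) - 1) * (2*k) - ((k : ℝ) - t) * ((m : ℝ) - 2*k)) := by
      field_simp
    linarith [heq ▸ h]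
  nlinarith [mul_nonneg (mul_nonneg (by positivity : (0:ℝ) ≤ 2*(k:ℝ))
    (by linarith : (0:ℝ) ≤ (k:ℝ) - t - 1)) hm0]


lemma pair_inter_unique {Q : Finset (Finset ℕ)} (hQ : Q.card = 2)
    {A1 B1 A2 B2 : Finset ℕ} (hA1 : A1 ∈ Q) (hB1 : B1 ∈ Q) (hne1 : A1 ≠ B1)
    (hA2 : A2 ∈ Q) (hB2 : B2 ∈ Q) (hne2 : A2 ≠ B2) : A1 ∩ B1 = A2 ∩ B2 := by
  obtain ⟨x, y, hxy, rfl⟩ := Finset.card_eq_two.mp hQ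
  simp only [mem_insert, mem_singleton] at hA1 hB1 hA2 hB2
  rcases hA1 with rfl | rfl <;> rcases hB1 with rfl | rfl <;>
    rcases hA2 with rfl | rfl <;> rcases hB2 with rfl | rfl <;>
    first
      | rfl
      | exact inter_comm _ _
      | exact absurd rfl hne1
      | exact absurd rfl hne2

set_option maxHeartbeats 1000000 in
/-- Claim 12: a regularized `k`-partite family that is not `t`-avoiding induces
at least `(k+t)|G|²/(4k|∂⁽ᵗ⁾(G)|)` pairs with intersection of size `t`. -/
theorem rho_not_avoiding_lower (k t n : ℕ) (hk : 0 < k) (ht : 0 < t)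
    (htk : t < k) (hkn : k ≤ n)
    (G : Finset (Finset ℕ)) (X : Fin k → Finset ℕ)
    (hX : IsPartition n k X)
    (hG : ∀ A ∈ G, A ⊆ Finset.Icc 1 n ∧ A.card = k)
    (hpart : ∀ A ∈ G, ∀ i, (A ∩ X i).card = 1)
    (hnotavoid : ∃ E ∈ G, ∃ F ∈ G, E ≠ F ∧ (E ∩ F).card = t)
    (hdiv : ∀ J ∈ IntStr X G, ∀ A ∈ G, Diverse (2 * (k : ℝ)) (fam G (restrJ X A J))) :
    ((k : ℝ) + (t : ℝ)) * (G.card : ℝ) ^ 2 / (4 * (k : ℝ) * ((shadow t G).card : ℝ))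
      ≤ (rhoPairs t G : ℝ) := by
  classical
  obtain ⟨E, hE, F, hF, hEF, hEFcard⟩ := hnotavoid
  set J : Finset (Fin k) := piProj X (E ∩ F) with hJdef
  have hJmem : J ∈ IntStr X G :=
    mem_image.mpr ⟨(E, F), mem_offDiag.mpr ⟨hE, hF, hEF⟩, rfl⟩
  have hJcard : J.card = t := by
    rw [hJdef, card_piProj hX inter_subset_left (hG E hE).1 (hpart E hE), hEFcard]
  have hφcard : ∀ A ∈ G, (restrJ X A J).card = t := fun A hA => by
    rw [card_restrJ hX (hpart A hA), hJcard]
  have hφsub : ∀ A : Finset ℕ, restrJ X A J ⊆ A := fun A => inter_subset_left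
  have hφshadow : ∀ A ∈ G, restrJ X A J ∈ shadow t G := fun A hA =>
    mem_biUnion.mpr ⟨A, hA, mem_powersetCard.mpr ⟨hφsub A, hφcard A hA⟩⟩
  set S : Finset (Finset ℕ) := G.image (fun A => restrJ X A J) with hSdef
  have hSsub : S ⊆ shadow t G := by
    rw [hSdef]
    exact image_subset_iff.mpr hφshadow
  have hclass : ∀ D ∈ S, ∀ A ∈ G, (restrJ X A J = D ↔ D ⊆ A) := by
    intro D hD A hA
    obtain ⟨A₀, hA₀, rfl⟩ := mem_image.mp hD
    constructor
    · intro h; rw [← h]; exact hφsub A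
    · intro h
      have hsub2 : restrJ X A₀ J ⊆ restrJ X A J :=
        subset_inter h inter_subset_right
      exact (eq_of_subset_of_card_le hsub2
        (by rw [hφcard A hA, hφcard A₀ hA₀])).symm
  have hGcard : G.card = ∑ D ∈ S, (G.filter (fun A => restrJ X A J = D)).card :=
    card_eq_sum_card_fiberwise (fun A hA => mem_image_of_mem _ hA)
  have hfilter_eq : ∀ D ∈ S,
      G.filter (fun A => restrJ X A J = D) = G.filter (fun A => D ⊆ A) := by
    intro D hD
    exact filter_congr (fun A hA => by
      simpa using hclass D hD A hA)
  have hDcard : ∀ D ∈ S, D.card = t := by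
    intro D hD
    obtain ⟨A₀, hA₀, rfl⟩ := mem_image.mp hD
    exact hφcard A₀ hA₀
  have hPbound : ∀ D ∈ S,
      ((k : ℝ) + t) * ((G.filter (fun A => restrJ X A J = D)).card : ℝ) ^ 2 / (4 * k)
        ≤ (((G.powersetCard 2).filter
            (fun P => ∃ A ∈ P, ∃ B ∈ P, A ≠ B ∧ A ∩ B = D)).card : ℝ) := by
    intro D hD
    obtain ⟨A₀, hA₀, hA₀eq⟩ := mem_image.mp hD
    have hdivD : Diverse (2 * (k : ℝ)) (fam G D) := hA₀eq ▸ hdiv J hJmem A₀ hA₀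
    rw [hfilter_eq D hD]
    exact class_bound k t hk htk G D (hDcard D hD) (fun A hA => (hG A hA).2) hdivD
  -- sum of the pair-counts is at most rhoPairs
  set PD : Finset ℕ → Finset (Finset (Finset ℕ)) := fun D =>
    (G.powersetCard 2).filter (fun P => ∃ A ∈ P, ∃ B ∈ P, A ≠ B ∧ A ∩ B = D)
    with hPDdef
  have hdisjPD : ∀ D1 ∈ S, ∀ D2 ∈ S, D1 ≠ D2 → Disjoint (PD D1) (PD D2) := by
    intro D1 _ D2 _ hne
    rw [Finset.disjoint_left]
    intro Q hQ1 hQ2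
    obtain ⟨hQP, A1, hA1, B1, hB1, hne1, hint1⟩ := mem_filter.mp hQ1
    obtain ⟨_, A2, hA2, B2, hB2, hne2, hint2⟩ := mem_filter.mp hQ2
    have hQ2card : Q.card = 2 := (mem_powersetCard.mp hQP).2
    exact hne (hint1 ▸ hint2 ▸ pair_inter_unique hQ2card hA1 hB1 hne1 hA2 hB2 hne2)
  have hsumP : ∑ D ∈ S, ((PD D).card : ℝ) ≤ (rhoPairs t G : ℝ) := by
    have h1 : ∑ D ∈ S, (PD D).card = (S.biUnion PD).card :=
      (card_biUnion hdisjPD).symm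
    have h2 : S.biUnion PD ⊆ (G.powersetCard 2).filter
        (fun P => ∃ A ∈ P, ∃ B ∈ P, A ≠ B ∧ (A ∩ B).card = t) := by
      intro Q hQ
      obtain ⟨D, hD, hQD⟩ := mem_biUnion.mp hQ
      obtain ⟨hQP, A1, hA1, B1, hB1, hne1, hint1⟩ := mem_filter.mp hQD
      exact mem_filter.mpr ⟨hQP, A1, hA1, B1, hB1, hne1, by rw [hint1, hDcard D hD]⟩
    have h3 : ∑ D ∈ S, (PD D).card ≤ rhoPairs t G := by
      rw [h1, rhoPairs]
      exact card_le_card h2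
    exact_mod_cast h3
  -- Cauchy–Schwarz and assembly
  have hSpos : 0 < S.card := card_pos.mpr ⟨_, mem_image_of_mem _ hE⟩
  have hshpos : 0 < (shadow t G).card := lt_of_lt_of_le hSpos (card_le_card hSsub)
  have hk' : (0 : ℝ) < k := by exact_mod_cast hk
  have hS' : (0 : ℝ) < S.card := by exact_mod_cast hSpos
  have hsh' : (0 : ℝ) < (shadow t G).card := by exact_mod_cast hshpos
  set M : Finset ℕ → ℝ := fun D => ((G.filter (fun A => restrJ X A J = D)).card : ℝ)
    with hMdef
  have hGsum : (G.card : ℝ) = ∑ D ∈ S, M D := by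
    rw [hMdef, hGcard]; push_cast; rfl
  have hCS : (∑ D ∈ S, M D) ^ 2 ≤ (S.card : ℝ) * ∑ D ∈ S, (M D) ^ 2 := by
    exact sq_sum_le_card_mul_sum_sq
  have step1 : ((k : ℝ) + t) * (G.card : ℝ) ^ 2 / (4 * k * (shadow t G).card)
      ≤ ((k : ℝ) + t) * (G.card : ℝ) ^ 2 / (4 * k * S.card) := by
    have hG0 : (0 : ℝ) < (G.card : ℝ) := by
      exact_mod_cast card_pos.mpr ⟨E, hE⟩
    have hnum : (0 : ℝ) < ((k : ℝ) + t) * (G.card : ℝ) ^ 2 := by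
      have ht0 : (0:ℝ) ≤ (t:ℝ) := Nat.cast_nonneg _
      exact mul_pos (by linarith) (pow_pos hG0 2)
    refine (div_le_div_iff_of_pos_left hnum (by positivity) (by positivity)).mpr ?_
    have hcc : (S.card : ℝ) ≤ ((shadow t G).card : ℝ) := by
      exact_mod_cast card_le_card hSsub
    nlinarith
  have step2 : ((k : ℝ) + t) * (G.card : ℝ) ^ 2 / (4 * k * S.card)
      ≤ ∑ D ∈ S, ((k : ℝ) + t) * (M D) ^ 2 / (4 * k) := by
    have hsq : (G.card : ℝ) ^ 2 / (S.card : ℝ) ≤ ∑ D ∈ S, (M D) ^ 2 := by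
      rw [div_le_iff₀ hS', hGsum]
      linarith [hCS]
    have hrw : ∑ D ∈ S, ((k : ℝ) + t) * (M D) ^ 2 / (4 * k)
        = (((k : ℝ) + t) / (4 * k)) * ∑ D ∈ S, (M D) ^ 2 := by
      rw [Finset.mul_sum]
      exact Finset.sum_congr rfl fun D _ => by ring
    have hrw2 : ((k : ℝ) + t) * (G.card : ℝ) ^ 2 / (4 * k * S.card)
        = (((k : ℝ) + t) / (4 * k)) * ((G.card : ℝ) ^ 2 / S.card) := by
      rw [eq_comm, div_mul_div_comm]
    rw [hrw, hrw2]
    apply mul_le_mul_of_nonneg_left hsq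
    positivity
  have step3 : ∑ D ∈ S, ((k : ℝ) + t) * (M D) ^ 2 / (4 * k)
      ≤ ∑ D ∈ S, ((PD D).card : ℝ) :=
    Finset.sum_le_sum fun D hD => hPbound D hD
  calc ((k : ℝ) + (t : ℝ)) * (G.card : ℝ) ^ 2 / (4 * (k : ℝ) * ((shadow t G).card : ℝ))
      ≤ ((k : ℝ) + t) * (G.card : ℝ) ^ 2 / (4 * k * S.card) := step1
    _ ≤ ∑ D ∈ S, ((k : ℝ) + t) * (M D) ^ 2 / (4 * k) := step2
    _ ≤ ∑ D ∈ S, ((PD D).card : ℝ) := step3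
    _ ≤ (rhoPairs t G : ℝ) := hsumP
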